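/- For a ∈ (-1,1) \ {0}, the four simple critical points of C_a, i.e., the solutions of 28z^4 - 8(a+1)z^2 + (a+1)^2 = 0, are neither real nor purely imaginary. -/
import Mathlib


/-- For `a ∈ (-1,1) \ {0}`, the simple critical points of `C_a`, i.e. the solutions of
`28z^4 - 8(a+1)z^2 + (a+1)^2 = 0`, are neither real nor purely imaginary. -/
theorem stmt4 (a : ℝ) (ha1 : -1 < a) (ha2 : a < 1) (ha0 : a ≠ 0)
    (z : ℂ) (hz : 28 * z ^ 4 - 8 * ((a : ℂ) + 1) * z ^ 2 + ((a : ℂ) + 1) ^ 2 = 0) :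
    z.im ≠ 0 ∧ z.re ≠ 0 := by
  have hc : a + 1 > 0 := by linarith
  constructor
  · intro h
    have hre := congrArg Complex.re hz
    simp [Complex.ext_iff, pow_succ, Complex.mul_re, Complex.mul_im, h,
      Complex.add_re, Complex.sub_re, Complex.one_re, Complex.ofReal_re,
      Complex.ofReal_im] at hre
    nlinarith [sq_nonneg (7 * z.re ^ 2 - (a + 1)), sq_nonneg (a + 1), hc]
  · intro h
    have hre := congrArg Complex.re hz
    simp [Complex.ext_iff, pow_succ, Complex.mul_re, Complex.mul_im, h,
      Complex.add_re, Complex.sub_re, Complex.one_re, Complex.ofReal_re,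
      Complex.ofReal_im] at hre
    nlinarith [sq_nonneg (z.im ^ 2), sq_nonneg (a + 1), hc, sq_nonneg z.im]
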